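/- (Lemma 4) In the spatial model, for every ε > 0 and γ ≥ 0, the global visibility of node i is sandwiched as exp(−2γε) · μ(Ball(χ_i, ε)) · p_i^{local}(γ) ≤ p_i^{global}(γ) ≤ p_i^{max}(γ), where Ball(χ_i, ε) is the open metric ball of radius ε around χ_i. -/

import Mathlib

open Finset Real MeasureTheory

/-- Lemma 4: in the spatial model, for every `ε > 0` and `γ ≥ 0`, the global visibility
of node `i` satisfies
`exp (-2γε) · μ(Ball(χ i, ε)) · p_i^{local}(γ) ≤ p_i^{global}(γ) ≤ p_i^{max}(γ)`. -/
theorem spatial_global_visibility_sandwich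
    {A : Type*} [MetricSpace A] [Nonempty A] [MeasurableSpace A] [BorelSpace A]
    (μ : Measure A) [IsProbabilityMeasure μ]
    {V : Type*} [Fintype V] [Nonempty V]
    (χ : V → A) (β : V → ℝ) (hβ : ∀ j, 0 < β j)
    (γ : ℝ) (hγ : 0 ≤ γ) (i : V) (ε : ℝ) (hε : 0 < ε) :
    Real.exp (-(2 * γ * ε)) * (μ (Metric.ball (χ i) ε)).toReal *
        (Real.exp (-γ * dist (χ i) (χ i)) * β i
          / ∑ j, Real.exp (-γ * dist (χ j) (χ i)) * β j)
      ≤ (∫ x, Real.exp (-γ * dist (χ i) x) * β i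
            / (∑ j, Real.exp (-γ * dist (χ j) x) * β j) ∂μ) ∧
    (∫ x, Real.exp (-γ * dist (χ i) x) * β i
          / (∑ j, Real.exp (-γ * dist (χ j) x) * β j) ∂μ)
      ≤ ⨆ x : A, Real.exp (-γ * dist (χ i) x) * β i
          / ∑ j, Real.exp (-γ * dist (χ j) x) * β j := by
  set D : A → ℝ := fun x => ∑ j, Real.exp (-γ * dist (χ j) x) * β j with hD
  set r : A → ℝ := fun x => Real.exp (-γ * dist (χ i) x) * β i / D x with hr
  have hDpos : ∀ x, 0 < D x := fun x =>
    Finset.sum_pos (fun j _ => mul_pos (Real.exp_pos _) (hβ j)) ⟨Classical.arbitrary V, mem_univ _⟩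
  have hr_nonneg : ∀ x, 0 ≤ r x := fun x =>
    div_nonneg (mul_nonneg (Real.exp_pos _).le (hβ i).le) (hDpos x).le
  have hr_le_one : ∀ x, r x ≤ 1 := by
    intro x
    rw [hr, div_le_one (hDpos x)]
    exact Finset.single_le_sum (f := fun j => Real.exp (-γ * dist (χ j) x) * β j)
      (fun j _ => mul_nonneg (Real.exp_pos _).le (hβ j).le) (mem_univ i)
  have hr_meas : Measurable r := by
    apply Measurable.div
    · exact ((Real.continuous_exp.comp
        (continuous_const.mul (continuous_const.dist continuous_id))).mul
        continuous_const).measurable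
    · exact (continuous_finset_sum _ fun j _ =>
        (Real.continuous_exp.comp
          (continuous_const.mul (continuous_const.dist continuous_id))).mul
          continuous_const).measurable
  have hr_int : Integrable r μ := by
    refine (integrable_const (1 : ℝ)).mono' hr_meas.aestronglyMeasurable (ae_of_all _ fun x => ?_)
    rw [Real.norm_eq_abs, abs_of_nonneg (hr_nonneg x)]
    exact hr_le_one x
  constructor
  · -- lower bound
    set c : ℝ := Real.exp (-(2 * γ * ε)) * (β i / D (χ i)) with hc
    have hc_nonneg : 0 ≤ c := mul_nonneg (Real.exp_pos _).le
      (div_nonneg (hβ i).le (hDpos _).le)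
    have key : ∀ x, (Metric.ball (χ i) ε).indicator (fun _ => c) x ≤ r x := by
      intro x
      by_cases hx : x ∈ Metric.ball (χ i) ε
      · rw [Set.indicator_of_mem hx]
        have hdx : dist (χ i) x < ε := by rw [dist_comm]; exact hx
        -- numerator bound
        have hnum : Real.exp (-γ * ε) * β i ≤ Real.exp (-γ * dist (χ i) x) * β i := by
          apply mul_le_mul_of_nonneg_right _ (hβ i).le
          exact Real.exp_le_exp.2 (by nlinarith)
        -- denominator bound
        have hden : D x ≤ Real.exp (γ * ε) * D (χ i) := by
          rw [hD, Finset.mul_sum]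
          apply Finset.sum_le_sum
          intro j _
          rw [← mul_assoc, ← Real.exp_add]
          apply mul_le_mul_of_nonneg_right _ (hβ j).le
          apply Real.exp_le_exp.2
          have htri : dist (χ j) (χ i) ≤ dist (χ j) x + dist x (χ i) := dist_triangle _ _ _
          have : dist x (χ i) < ε := hx
          nlinarith
        have h1 : Real.exp (-γ * ε) * β i / (Real.exp (γ * ε) * D (χ i)) ≤ r x := by
          apply div_le_div₀ (mul_nonneg (Real.exp_pos _).le (hβ i).le) hnum (hDpos x) hden
        refine le_trans (le_of_eq ?_) h1
        have hexp : Real.exp (-(2 * γ * ε)) = Real.exp (-γ * ε) / Real.exp (γ * ε) := by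
          rw [← Real.exp_sub]; ring_nf
        rw [hc, hexp]
        field_simp
      · rw [Set.indicator_of_notMem hx]; exact hr_nonneg x
    have hind_int : Integrable ((Metric.ball (χ i) ε).indicator (fun _ => c)) μ :=
      (integrable_const c).indicator Metric.isOpen_ball.measurableSet
    have := integral_mono hind_int hr_int key
    rw [integral_indicator Metric.isOpen_ball.measurableSet, setIntegral_const] at this
    refine le_trans (le_of_eq ?_) this
    rw [hc, smul_eq_mul]
    simp [hD, dist_self]
    rw [measureReal_def]
    ring
  · -- upper bound
    have hbdd : BddAbove (Set.range r) := ⟨1, by rintro _ ⟨x, rfl⟩; exact hr_le_one x⟩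
    have := integral_mono hr_int (integrable_const (⨆ x : A, r x)) (fun x => le_ciSup hbdd x)
    rwa [integral_const, measureReal_def, measure_univ, ENNReal.toReal_one, one_smul] at this
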